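/- Let u_k, v_k, b₁, R_k, r_k be as above with b₁ ≠ 0. Then the inverse relations hold: u_k = R_k · (∑_{j=1}^m r_j + n) / (∑_{j=1}^m R_j − 1) and v_k = (r_k / R_k) · (∑_{j=1}^m R_j − 1) / (∑_{j=1}^m r_j + n), provided ∑_j R_j ≠ 1, ∑_j r_j + n ≠ 0, and R_k ≠ 0. -/

import Mathlib

open Finset

theorem stmt1 (m : ℕ) (n : ℝ) (u v R r : Fin m → ℝ) (b1 : ℝ)
    (hb1 : b1 = -∑ k, u k * (v k - 1) - n)
    (hb1ne : b1 ≠ 0)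
    (hR : ∀ k, R k = u k / b1)
    (hr : ∀ k, r k = u k * v k)
    (hsum : ∑ j, R j ≠ 1)
    (hsumr : ∑ j, r j + n ≠ 0)
    (hRne : ∀ k, R k ≠ 0) :
    ∀ k, u k = R k * (∑ j, r j + n) / (∑ j, R j - 1) ∧
      v k = (r k / R k) * (∑ j, R j - 1) / (∑ j, r j + n) := by
  have hsumR : ∑ j, R j = (∑ j, u j) / b1 := by
    simp [hR, Finset.sum_div]
  have hkey : ∑ j, R j - 1 = (∑ j, r j + n) / b1 := by
    rw [hsumR]
    field_simp
    rw [hb1]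
    simp [hr, Finset.sum_sub_distrib, mul_sub]
    ring
  intro k
  have hu : u k ≠ 0 := by
    intro h
    exact hRne k (by simp [hR, h])
  constructor
  · rw [hkey, hR]
    field_simp
  · rw [hkey, hR, hr]
    field_simp
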